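/- Sober L-topological spaces are closed under products and [ ]-closed subspaces: (i) for any family (X_i, τ_i), i ∈ I, of sober L-topological spaces, the product ∏_{i∈I} X_i with the product L-topology is sober; (ii) if (Y, δ) is a sober L-topological space and M ⊆ Y satisfies [M] = M, then the subspace (M, δ_M) is sober. -/
import Mathlib


universe u v

/-- `τ` is an `L`-topology on `X`: a set of `L`-sets closed under arbitrary pointwise
suprema (including the empty one, `⊥`) and finite pointwise infima (including the
empty one, `⊤`). -/
def IsLTop {L : Type*} [Order.Frame L] {X : Type*} (τ : Set (X → L)) : Prop :=
  (∀ S ⊆ τ, sSup S ∈ τ) ∧ ∀ S ⊆ τ, S.Finite → sInf S ∈ τ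

/-- `f` is continuous from `(X, τ)` to `(Y, δ)`. -/
def LCont {L : Type*} [Order.Frame L] {X Y : Type*}
    (τ : Set (X → L)) (δ : Set (Y → L)) (f : X → Y) : Prop :=
  ∀ ν ∈ δ, ν ∘ f ∈ τ

/-- The Sierpinski `L`-topology on `L`: generated by `id`, it consists of the constant
function `⊥`, the identity, and the constant function `⊤`. -/
def sierpinskiLTop (L : Type*) [Order.Frame L] : Set (L → L) :=
  {⊥, id, ⊤}

/-- `(X, τ)` is a T₀ `L`-topological space. -/
def IsT0LTop {L : Type*} [Order.Frame L] {X : Type*} (τ : Set (X → L)) : Prop :=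
  ∀ x y : X, x ≠ y → ∃ μ ∈ τ, μ x ≠ μ y

/-- `f : (X,τ) → (Y,δ)` is an embedding: `f` is injective and `τ = {ν ∘ f | ν ∈ δ}`. -/
def IsLEmbedding {L : Type*} [Order.Frame L] {X Y : Type*}
    (τ : Set (X → L)) (δ : Set (Y → L)) (f : X → Y) : Prop :=
  Function.Injective f ∧ τ = {μ | ∃ ν ∈ δ, μ = ν ∘ f}

/-- The smallest `L`-topology containing a family `ζ` of `L`-sets. -/
def genLTop {L : Type*} [Order.Frame L] {X : Type*} (ζ : Set (X → L)) : Set (X → L) :=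
  ⋂₀ {τ | IsLTop τ ∧ ζ ⊆ τ}

/-- The product `L`-topology on `∀ i, X i`: the smallest `L`-topology containing all
`ν ∘ pᵢ` with `ν ∈ τ i`. -/
def prodLTop {L : Type*} [Order.Frame L] {I : Type*} {X : I → Type*}
    (τ : ∀ i, Set (X i → L)) : Set ((∀ i, X i) → L) :=
  genLTop {μ | ∃ i, ∃ ν ∈ τ i, μ = fun x => ν (x i)}

/-- The product of `I` copies of the Sierpinski `L`-space, `L_S^I`. -/
def sierpinskiPow (L : Type*) [Order.Frame L] (I : Type*) : Set ((I → L) → L) :=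
  prodLTop fun _ : I => sierpinskiLTop L

/-- The subspace `L`-topology on `M ⊆ Y`: restrictions of members of `δ`. -/
def subLTop {L : Type*} [Order.Frame L] {Y : Type*} (δ : Set (Y → L)) (M : Set Y) :
    Set (↥M → L) :=
  {ν | ∃ μ ∈ δ, ν = fun y => μ y.1}

/-- Homeomorphism: a continuous bijection with continuous inverse. -/
def IsLHomeo {L : Type*} [Order.Frame L] {X Y : Type*}
    (τ : Set (X → L)) (δ : Set (Y → L)) (f : X → Y) : Prop :=
  LCont τ δ f ∧
    ∃ g : Y → X, LCont δ τ g ∧ Function.LeftInverse g f ∧ Function.RightInverse g f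

/-- Epimorphism in `L`-**Top₀**. -/
def IsLEpiT0 {L : Type*} [Order.Frame L] {X Y : Type*}
    (τ : Set (X → L)) (δ : Set (Y → L)) (f : X → Y) : Prop :=
  ∀ (Z : Type*) (Δ : Set (Z → L)), IsLTop Δ → IsT0LTop Δ →
    ∀ g h : Y → Z, LCont δ Δ g → LCont δ Δ h → g ∘ f = h ∘ f → g = h

/-- The `[ ]`-closure of `M` in `(Y, δ)`: the intersection of the equalizers of all pairs
of continuous maps into T₀ `L`-topological spaces that agree on `M`. -/
def brClosure {L : Type*} [Order.Frame L] {Y : Type*} (δ : Set (Y → L)) (M : Set Y) :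
    Set Y :=
  {y | ∀ (Z : Type*) (Δ : Set (Z → L)), IsLTop Δ → IsT0LTop Δ →
    ∀ g h : Y → Z, LCont δ Δ g → LCont δ Δ h → (∀ m ∈ M, g m = h m) → g y = h y}

/-- `p` is a frame homomorphism from the frame `τ` (ordered pointwise, with pointwise
suprema and finite infima) to `L`: it preserves arbitrary suprema and finite infima. -/
def IsLFrameHom {L : Type*} [Order.Frame L] {X : Type*} (τ : Set (X → L))
    (p : ↥τ → L) : Prop :=
  (∀ (S : Set (X → L)) (hS : S ⊆ τ) (h : sSup S ∈ τ),
    p ⟨sSup S, h⟩ = ⨆ μ : S, p ⟨μ.1, hS μ.2⟩) ∧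
  ∀ (S : Set (X → L)) (hS : S ⊆ τ), S.Finite → ∀ h : sInf S ∈ τ,
    p ⟨sInf S, h⟩ = ⨅ μ : S, p ⟨μ.1, hS μ.2⟩

/-- `pt_L(τ)`: the collection of frame homomorphisms `τ → L`. -/
def LPt {L : Type*} [Order.Frame L] {X : Type*} (τ : Set (X → L)) : Type _ :=
  {p : ↥τ → L // IsLFrameHom τ p}

/-- The `L`-topology `φ_L(τ) = {φ_L(μ) | μ ∈ τ}` on `pt_L(τ)`, where `φ_L(μ)(p) = p(μ)`. -/
def phiTop {L : Type*} [Order.Frame L] {X : Type*} (τ : Set (X → L)) :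
    Set (LPt τ → L) :=
  {ν | ∃ μ : ↥τ, ν = fun p => p.1 μ}

/-- `(X, τ)` is sober: every frame homomorphism `p : τ → L` is given by evaluation at a
unique point of `X`. -/
def IsLSober {L : Type*} [Order.Frame L] {X : Type*} (τ : Set (X → L)) : Prop :=
  ∀ p : ↥τ → L, IsLFrameHom τ p → ∃! x : X, ∀ μ : ↥τ, p μ = μ.1 x

/-- `η_X : X → pt_L(τ)`, `η_X(x)(μ) = μ(x)`. -/
def etaPt {L : Type*} [Order.Frame L] {X : Type*} (τ : Set (X → L)) (x : X) : LPt τ :=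
  ⟨fun μ => μ.1 x,
    ⟨fun S hS h => by simp [sSup_apply], fun S hS hfin h => by simp [sInf_apply]⟩⟩

/-- The image `f^→(μ)` of an `L`-set under a map. -/
def LImage {L : Type*} [Order.Frame L] {X Y : Type*} (f : X → Y) (μ : X → L) : Y → L :=
  fun y => ⨆ x ∈ f ⁻¹' {y}, μ x

/-- The T₀-identification relation: `x ~ y` iff `μ x = μ y` for all `μ ∈ τ`. -/
def t0Rel {L : Type*} [Order.Frame L] {X : Type*} (τ : Set (X → L)) (x y : X) : Prop :=
  ∀ μ ∈ τ, μ x = μ y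

/-- The quotient `X/~`. -/
def T0Quot {L : Type*} [Order.Frame L] {X : Type*} (τ : Set (X → L)) : Type _ :=
  Quot (t0Rel τ)

/-- The quotient map `q : X → X/~`. -/
def t0q {L : Type*} [Order.Frame L] {X : Type*} (τ : Set (X → L)) : X → T0Quot τ :=
  Quot.mk _

/-- The quotient `L`-topology on `X/~`. -/
def t0QuotTop {L : Type*} [Order.Frame L] {X : Type*} (τ : Set (X → L)) :
    Set (T0Quot τ → L) :=
  {ν | ν ∘ t0q τ ∈ τ}

/-- All finite pointwise infima of members of `ζ`. -/
def finInfs {L : Type*} [Order.Frame L] {X : Type*} (ζ : Set (X → L)) : Set (X → L) :=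
  {μ | ∃ F ⊆ ζ, F.Finite ∧ μ = sInf F}

/-- `⟨ζ⟩`: all pointwise suprema of sets of finite pointwise infima of members of `ζ`. -/
def genSupInf {L : Type*} [Order.Frame L] {X : Type*} (ζ : Set (X → L)) : Set (X → L) :=
  {μ | ∃ G ⊆ finInfs ζ, μ = sSup G}

section StSAux

variable {L : Type*} [Order.Frame L]

lemma stS_sSup_apply {X : Type*} (T : Set (X → L)) (x : X) :
    sSup T x = ⨆ μ ∈ T, μ x := by rw [sSup_apply, iSup_subtype']

lemma stS_sInf_apply {X : Type*} (T : Set (X → L)) (x : X) :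
    sInf T x = ⨅ μ ∈ T, μ x := by rw [sInf_apply, iInf_subtype']

lemma stS_biSup_eq {α : Type*} (S : Set α) (f : α → L) :
    ⨆ a ∈ S, f a = ⨆ a : S, f a.1 := by rw [iSup_subtype']

lemma stS_biInf_eq {α : Type*} (S : Set α) (f : α → L) :
    ⨅ a ∈ S, f a = ⨅ a : S, f a.1 := by rw [iInf_subtype']

lemma stS_genLTop_isLTop {X : Type*} (ζ : Set (X → L)) : IsLTop (genLTop ζ) := by
  constructor
  · exact fun S hS => Set.mem_sInter.2 fun τ' hτ' =>
      hτ'.1.1 S fun μ hμ => Set.mem_sInter.1 (hS hμ) τ' hτ'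
  · exact fun S hS hfin => Set.mem_sInter.2 fun τ' hτ' =>
      hτ'.1.2 S (fun μ hμ => Set.mem_sInter.1 (hS hμ) τ' hτ') hfin

lemma stS_subset_genLTop {X : Type*} (ζ : Set (X → L)) : ζ ⊆ genLTop ζ :=
  fun _ hμ => Set.mem_sInter.2 fun _ hτ' => hτ'.2 hμ

lemma stS_genLTop_subset {X : Type*} {ζ τ : Set (X → L)} (h1 : IsLTop τ) (h2 : ζ ⊆ τ) :
    genLTop ζ ⊆ τ := fun _ hμ => Set.mem_sInter.1 hμ τ ⟨h1, h2⟩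

lemma stS_sober_ext {X : Type*} {τ : Set (X → L)} (hs : IsLSober τ) {x y : X}
    (h : ∀ μ ∈ τ, μ x = μ y) : x = y := by
  obtain ⟨z, _, hu⟩ := hs (fun μ => μ.1 x) (etaPt τ x).2
  exact (hu x fun μ => rfl).trans (hu y fun μ => h μ.1 μ.2).symm

open Classical in
noncomputable def stS_P {X : Type*} (τ : Set (X → L)) (p : ↥τ → L) : (X → L) → L :=
  fun μ => if h : μ ∈ τ then p ⟨μ, h⟩ else ⊥

lemma stS_P_eq {X : Type*} {τ : Set (X → L)} (p : ↥τ → L) {μ : X → L} (h : μ ∈ τ) :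
    stS_P τ p μ = p ⟨μ, h⟩ := by unfold stS_P; exact dif_pos h

lemma stS_P_sup {X : Type*} {τ : Set (X → L)} {p : ↥τ → L} (hp : IsLFrameHom τ p)
    {S : Set (X → L)} (hS : S ⊆ τ) (h : sSup S ∈ τ) :
    stS_P τ p (sSup S) = ⨆ μ ∈ S, stS_P τ p μ := by
  rw [stS_P_eq p h, hp.1 S hS h, stS_biSup_eq]
  exact iSup_congr fun μ => (stS_P_eq p (hS μ.2)).symm

lemma stS_P_inf {X : Type*} {τ : Set (X → L)} {p : ↥τ → L} (hp : IsLFrameHom τ p)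
    {S : Set (X → L)} (hS : S ⊆ τ) (hfin : S.Finite) (h : sInf S ∈ τ) :
    stS_P τ p (sInf S) = ⨅ μ ∈ S, stS_P τ p μ := by
  rw [stS_P_eq p h, hp.2 S hS hfin h, stS_biInf_eq]
  exact iInf_congr fun μ => (stS_P_eq p (hS μ.2)).symm

end StSAux

section StSMain

variable {L : Type*} [Order.Frame L]

/-- Composition with the `i`-th projection. -/
def stS_comp {I : Type*} {X : I → Type*} (i : I) (ν : X i → L) : (∀ j, X j) → L :=
  fun x => ν (x i)

lemma stS_comp_sSup {I : Type*} {X : I → Type*} (i : I) (S : Set (X i → L)) :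
    stS_comp i (sSup S) = sSup (stS_comp (L := L) i '' S) := by
  funext x
  show sSup S (x i) = sSup (stS_comp (L := L) i '' S) x
  rw [stS_sSup_apply, stS_sSup_apply, iSup_image]
  rfl

lemma stS_comp_sInf {I : Type*} {X : I → Type*} (i : I) (S : Set (X i → L)) :
    stS_comp i (sInf S) = sInf (stS_comp (L := L) i '' S) := by
  funext x
  show sInf S (x i) = sInf (stS_comp (L := L) i '' S) x
  rw [stS_sInf_apply, stS_sInf_apply, iInf_image]
  rfl

lemma stS_prod_sober {I : Type*} {X : I → Type*} (τ : ∀ i, Set (X i → L))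
    (hs : ∀ i, IsLSober (τ i)) : IsLSober (prodLTop τ) := by
  intro p hp
  have htop : IsLTop (prodLTop τ) := stS_genLTop_isLTop _
  have hmem : ∀ i, ∀ ν ∈ τ i, stS_comp i ν ∈ prodLTop τ :=
    fun i ν hν => stS_subset_genLTop _ ⟨i, ν, hν, rfl⟩
  have hpi : ∀ i, IsLFrameHom (τ i)
      fun ν : ↥(τ i) => p ⟨stS_comp i ν.1, hmem i ν.1 ν.2⟩ := by
    intro i
    constructor
    · intro S hS h
      have h1 : stS_comp (L := L) i '' S ⊆ prodLTop τ := by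
        rintro _ ⟨ν, hν, rfl⟩; exact hmem i ν (hS hν)
      have h2 : sSup (stS_comp (L := L) i '' S) ∈ prodLTop τ := htop.1 _ h1
      calc p ⟨stS_comp i (sSup S), hmem i _ h⟩
          = stS_P _ p (stS_comp i (sSup S)) := (stS_P_eq p _).symm
        _ = stS_P _ p (sSup (stS_comp (L := L) i '' S)) := by rw [stS_comp_sSup]
        _ = ⨆ μ ∈ stS_comp (L := L) i '' S, stS_P _ p μ := stS_P_sup hp h1 h2
        _ = ⨆ ν ∈ S, stS_P _ p (stS_comp i ν) := by rw [iSup_image]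
        _ = ⨆ ν : S, p ⟨stS_comp i ν.1, hmem i ν.1 (hS ν.2)⟩ := by
            rw [stS_biSup_eq]; exact iSup_congr fun ν => stS_P_eq p _
    · intro S hS hfin h
      have h1 : stS_comp (L := L) i '' S ⊆ prodLTop τ := by
        rintro _ ⟨ν, hν, rfl⟩; exact hmem i ν (hS hν)
      have h2 : sInf (stS_comp (L := L) i '' S) ∈ prodLTop τ :=
        htop.2 _ h1 (hfin.image _)
      calc p ⟨stS_comp i (sInf S), hmem i _ h⟩
          = stS_P _ p (stS_comp i (sInf S)) := (stS_P_eq p _).symm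
        _ = stS_P _ p (sInf (stS_comp (L := L) i '' S)) := by rw [stS_comp_sInf]
        _ = ⨅ μ ∈ stS_comp (L := L) i '' S, stS_P _ p μ :=
            stS_P_inf hp h1 (hfin.image _) h2
        _ = ⨅ ν ∈ S, stS_P _ p (stS_comp i ν) := by rw [iInf_image]
        _ = ⨅ ν : S, p ⟨stS_comp i ν.1, hmem i ν.1 (hS ν.2)⟩ := by
            rw [stS_biInf_eq]; exact iInf_congr fun ν => stS_P_eq p _
  let x : ∀ i, X i := fun i => (hs i _ (hpi i)).exists.choose
  have hx : ∀ i, ∀ ν : ↥(τ i), p ⟨stS_comp i ν.1, hmem i ν.1 ν.2⟩ = ν.1 (x i) :=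
    fun i => (hs i _ (hpi i)).exists.choose_spec
  have key : prodLTop τ ⊆ {μ | μ ∈ prodLTop τ ∧ stS_P _ p μ = μ x} := by
    refine stS_genLTop_subset ⟨?_, ?_⟩ ?_
    · intro S hS
      have h1 : S ⊆ prodLTop τ := fun μ hμ => (hS hμ).1
      have h2 : sSup S ∈ prodLTop τ := htop.1 S h1
      refine ⟨h2, ?_⟩
      rw [stS_P_sup hp h1 h2, stS_sSup_apply]
      exact biSup_congr fun μ hμ => (hS hμ).2
    · intro S hS hfin
      have h1 : S ⊆ prodLTop τ := fun μ hμ => (hS hμ).1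
      have h2 : sInf S ∈ prodLTop τ := htop.2 S h1 hfin
      refine ⟨h2, ?_⟩
      rw [stS_P_inf hp h1 hfin h2, stS_sInf_apply]
      exact biInf_congr fun μ hμ => (hS hμ).2
    · rintro μ ⟨i, ν, hν, rfl⟩
      refine ⟨hmem i ν hν, ?_⟩
      show stS_P (prodLTop τ) p (stS_comp i ν) = stS_comp i ν x
      rw [stS_P_eq p (hmem i ν hν)]
      exact hx i ⟨ν, hν⟩
  refine ⟨x, fun μ => (stS_P_eq p μ.2).symm.trans (key μ.2).2, fun y hy => ?_⟩
  funext i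
  refine stS_sober_ext (hs i) fun ν hν => ?_
  exact (hy ⟨stS_comp i ν, hmem i ν hν⟩).symm.trans (hx i ⟨ν, hν⟩)

/-- Restriction to a subset. -/
def stS_res {Y : Type*} (M : Set Y) (μ : Y → L) : ↥M → L := fun m => μ m.1

lemma stS_res_sSup {Y : Type*} (M : Set Y) (S : Set (Y → L)) :
    stS_res M (sSup S) = sSup (stS_res (L := L) M '' S) := by
  funext m
  show sSup S m.1 = sSup (stS_res (L := L) M '' S) m
  rw [stS_sSup_apply, stS_sSup_apply, iSup_image]
  rfl

lemma stS_res_sInf {Y : Type*} (M : Set Y) (S : Set (Y → L)) :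
    stS_res M (sInf S) = sInf (stS_res (L := L) M '' S) := by
  funext m
  show sInf S m.1 = sInf (stS_res (L := L) M '' S) m
  rw [stS_sInf_apply, stS_sInf_apply, iInf_image]
  rfl

lemma stS_sub_sober {Y : Type*} (δ : Set (Y → L)) (M : Set Y) (ht : IsLTop δ)
    (hs : IsLSober δ) (hM : brClosure δ M = M) : IsLSober (subLTop δ M) := by
  intro p hp
  have hresmem : ∀ μ ∈ δ, stS_res M μ ∈ subLTop δ M := fun μ hμ => ⟨μ, hμ, rfl⟩
  have hq : IsLFrameHom δ fun μ : ↥δ => p ⟨stS_res M μ.1, hresmem μ.1 μ.2⟩ := by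
    constructor
    · intro S hS h
      have h1 : stS_res (L := L) M '' S ⊆ subLTop δ M := by
        rintro _ ⟨μ, hμ, rfl⟩; exact hresmem μ (hS hμ)
      have h2 : sSup (stS_res (L := L) M '' S) ∈ subLTop δ M :=
        ⟨sSup S, ht.1 S hS, (stS_res_sSup M S).symm⟩
      calc p ⟨stS_res M (sSup S), hresmem _ h⟩
          = stS_P _ p (stS_res M (sSup S)) := (stS_P_eq p _).symm
        _ = stS_P _ p (sSup (stS_res (L := L) M '' S)) := by rw [stS_res_sSup]
        _ = ⨆ ν ∈ stS_res (L := L) M '' S, stS_P _ p ν := stS_P_sup hp h1 h2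
        _ = ⨆ μ ∈ S, stS_P _ p (stS_res M μ) := by rw [iSup_image]
        _ = ⨆ μ : S, p ⟨stS_res M μ.1, hresmem μ.1 (hS μ.2)⟩ := by
            rw [stS_biSup_eq]; exact iSup_congr fun μ => stS_P_eq p _
    · intro S hS hfin h
      have h1 : stS_res (L := L) M '' S ⊆ subLTop δ M := by
        rintro _ ⟨μ, hμ, rfl⟩; exact hresmem μ (hS hμ)
      have h2 : sInf (stS_res (L := L) M '' S) ∈ subLTop δ M :=
        ⟨sInf S, ht.2 S hS hfin, (stS_res_sInf M S).symm⟩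
      calc p ⟨stS_res M (sInf S), hresmem _ h⟩
          = stS_P _ p (stS_res M (sInf S)) := (stS_P_eq p _).symm
        _ = stS_P _ p (sInf (stS_res (L := L) M '' S)) := by rw [stS_res_sInf]
        _ = ⨅ ν ∈ stS_res (L := L) M '' S, stS_P _ p ν :=
            stS_P_inf hp h1 (hfin.image _) h2
        _ = ⨅ μ ∈ S, stS_P _ p (stS_res M μ) := by rw [iInf_image]
        _ = ⨅ μ : S, p ⟨stS_res M μ.1, hresmem μ.1 (hS μ.2)⟩ := by
            rw [stS_biInf_eq]; exact iInf_congr fun μ => stS_P_eq p _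
  obtain ⟨y, hy, hyu⟩ := hs _ hq
  have hagree : ∀ μ₁ ∈ δ, ∀ μ₂ ∈ δ, (∀ m ∈ M, μ₁ m = μ₂ m) → μ₁ y = μ₂ y := by
    intro μ₁ h1 μ₂ h2 hagr
    have e : stS_res M μ₁ = stS_res M μ₂ := funext fun m => hagr m.1 m.2
    have e1 := hy ⟨μ₁, h1⟩
    have e2 := hy ⟨μ₂, h2⟩
    have e3 : p ⟨stS_res M μ₁, hresmem μ₁ h1⟩ = p ⟨stS_res M μ₂, hresmem μ₂ h2⟩ := by
      congr 1
      exact Subtype.ext e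
    exact e1.symm.trans (e3.trans e2)
  have hyM : y ∈ M := by
    rw [← hM]
    intro Z Δ hΔ hT0 g h hg hh hgh
    by_contra hne
    obtain ⟨ν, hν, hneq⟩ := hT0 (g y) (h y) hne
    exact hneq (hagree (ν ∘ g) (hg ν hν) (ν ∘ h) (hh ν hν)
      fun m hm => by simp [Function.comp, hgh m hm])
  refine ⟨⟨y, hyM⟩, fun μ' => ?_, fun m hm => ?_⟩
  · obtain ⟨μ, hμ, he⟩ := μ'.2
    have e1 : p μ' = μ y := by
      have h0 := hy ⟨μ, hμ⟩
      have hμ' : μ' = ⟨stS_res M μ, hresmem μ hμ⟩ := Subtype.ext he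
      rw [hμ']
      exact h0
    rw [e1, he]
  · exact Subtype.ext (hyu m.1 fun μ => hm ⟨stS_res M μ.1, hresmem μ.1 μ.2⟩)

end StSMain

/-- Sober `L`-topological spaces are closed under products and `[ ]`-closed
subspaces. -/
theorem stmt18 {L : Type*} [Order.Frame L] :
    (∀ (I : Type*) (X : I → Type*) (τ : ∀ i, Set (X i → L)),
      (∀ i, IsLTop (τ i)) → (∀ i, IsLSober (τ i)) → IsLSober (prodLTop τ)) ∧
    ∀ (Y : Type*) (δ : Set (Y → L)) (M : Set Y),
      IsLTop δ → IsLSober δ → brClosure δ M = M → IsLSober (subLTop δ M) :=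
  ⟨fun _ _ τ _ hs => stS_prod_sober τ hs, fun _ δ M ht hs hM => stS_sub_sober δ M ht hs hM⟩
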